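/- Let ρ, k : ℝ → ℝ³ be differentiable at t with derivatives ρ̇(t), k̇(t); suppose ρ(t) ≠ 0 and ẑ(t) × k(t) ≠ 0 where ẑ(s) = ρ(s)/‖ρ(s)‖, and suppose the map s ↦ x̂(s) = (ẑ(s) × k(s))/‖ẑ(s) × k(s)‖ is differentiable at t; set ŷ(s) = ẑ(s) × x̂(s). Define ω_{z⊥}(t) = (ρ(t) × ρ̇(t))/‖ρ(t)‖², ω_y(t) = ⟨ω_{z⊥}(t), ŷ(t)⟩, ω_z(t) = (ω_y(t)·⟨k(t), ẑ(t)⟩ − ⟨k̇(t), x̂(t)⟩)/⟨k(t), ŷ(t)⟩, and ω_D(t) = ω_{z⊥}(t) + ω_z(t)·ẑ(t). Then the derivatives at t of ẑ, x̂ and ŷ equal ω_D(t) × ẑ(t), ω_D(t) × x̂(t) and ω_D(t) × ŷ(t), respectively. -/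

import Mathlib

open scoped RealInnerProductSpace

noncomputable def cross3 (a b : EuclideanSpace ℝ (Fin 3)) : EuclideanSpace ℝ (Fin 3) :=
  (EuclideanSpace.equiv (Fin 3) ℝ).symm
    (crossProduct ((EuclideanSpace.equiv (Fin 3) ℝ) a) ((EuclideanSpace.equiv (Fin 3) ℝ) b))

local notation "E3" => EuclideanSpace ℝ (Fin 3)

lemma cross3_apply (a b : E3) (i : Fin 3) :
    cross3 a b i = ![a 1 * b 2 - a 2 * b 1, a 2 * b 0 - a 0 * b 2, a 0 * b 1 - a 1 * b 0] i := by
  simp [cross3, crossProduct]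

lemma inner3 (a b : E3) : ⟪a, b⟫ = a 0 * b 0 + a 1 * b 1 + a 2 * b 2 := by
  simp [PiLp.inner_apply, Fin.sum_univ_three, RCLike.inner_apply, mul_comm]

lemma ext3 {a b : E3} (h : ∀ i, a i = b i) : a = b := PiLp.ext h

lemma cross_cross_left (a b c : E3) :
    cross3 (cross3 a b) c = ⟪a,c⟫ • b - ⟪b,c⟫ • a := by
  apply ext3; intro i; fin_cases i <;>
    simp [cross3_apply, inner3, Fin.sum_univ_three, PiLp.smul_apply, PiLp.sub_apply] <;> ring

lemma cross_cross_right (a b c : E3) :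
    cross3 a (cross3 b c) = ⟪a,c⟫ • b - ⟪a,b⟫ • c := by
  apply ext3; intro i; fin_cases i <;>
    simp [cross3_apply, inner3, Fin.sum_univ_three, PiLp.smul_apply, PiLp.sub_apply] <;> ring

lemma inner_cross_cyclic (a b c : E3) : ⟪cross3 a b, c⟫ = ⟪a, cross3 b c⟫ := by
  simp [cross3_apply, inner3, Fin.sum_univ_three]; ring

lemma jacobi3 (a b c : E3) :
    cross3 (cross3 a b) c + cross3 b (cross3 a c) = cross3 a (cross3 b c) := by
  apply ext3; intro i; fin_cases i <;>
    simp [cross3_apply, PiLp.add_apply] <;> ring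

lemma cross_smul_left (r : ℝ) (a b : E3) : cross3 (r • a) b = r • cross3 a b := by
  apply ext3; intro i; fin_cases i <;>
    simp [cross3_apply, PiLp.smul_apply] <;> ring

lemma cross_smul_right (r : ℝ) (a b : E3) : cross3 a (r • b) = r • cross3 a b := by
  apply ext3; intro i; fin_cases i <;>
    simp [cross3_apply, PiLp.smul_apply] <;> ring

lemma cross_add_left (a b c : E3) : cross3 (a + b) c = cross3 a c + cross3 b c := by
  apply ext3; intro i; fin_cases i <;>
    simp [cross3_apply, PiLp.add_apply] <;> ring

lemma cross3_self_eq (a : E3) : cross3 a a = 0 := by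
  apply ext3; intro i; fin_cases i <;> simp [cross3_apply] <;> ring

lemma inner_cross3_self_eq_left (a b : E3) : ⟪cross3 a b, a⟫ = 0 := by
  simp [cross3_apply, inner3, Fin.sum_univ_three]; ring

lemma inner_cross3_self_eq_right (a b : E3) : ⟪cross3 a b, b⟫ = 0 := by
  simp [cross3_apply, inner3, Fin.sum_univ_three]; ring

lemma hasDerivAt_e3 {f : ℝ → E3} {f' : E3} {t : ℝ} :
    HasDerivAt f f' t ↔ ∀ i, HasDerivAt (fun s => f s i) (f' i) t := by
  constructor
  · intro h i
    exact ((EuclideanSpace.proj i).hasFDerivAt.comp_hasDerivAt t h)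
  · intro h
    have h2 : HasDerivAt (fun s => (EuclideanSpace.equiv (Fin 3) ℝ) (f s))
        ((EuclideanSpace.equiv (Fin 3) ℝ) f') t := hasDerivAt_pi.2 h
    exact ((EuclideanSpace.equiv (Fin 3) ℝ).symm.hasFDerivAt.comp_hasDerivAt t h2)

lemma hasDerivAt_cross {f g : ℝ → E3} {f' g' : E3} {t : ℝ}
    (hf : HasDerivAt f f' t) (hg : HasDerivAt g g' t) :
    HasDerivAt (fun s => cross3 (f s) (g s)) (cross3 f' (g t) + cross3 (f t) g') t := by
  rw [hasDerivAt_e3] at hf hg ⊢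
  intro i
  have h01 := (hf 0).mul (hg 1)
  have h10 := (hf 1).mul (hg 0)
  have h02 := (hf 0).mul (hg 2)
  have h20 := (hf 2).mul (hg 0)
  have h12 := (hf 1).mul (hg 2)
  have h21 := (hf 2).mul (hg 1)
  fin_cases i <;>
    simp only [cross3_apply, PiLp.add_apply, Matrix.cons_val_zero, Matrix.cons_val_one,
      Matrix.head_cons, Matrix.cons_val_two, Matrix.tail_cons] <;>
  · refine HasDerivAt.congr_deriv (HasDerivAt.sub (by assumption) (by assumption)) ?_
    simp
    ring

lemma cross3_zero_right (a : E3) : cross3 a 0 = 0 := by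
  apply ext3; intro i; fin_cases i <;> simp [cross3_apply]

lemma perp3_eq_zero {x z v : E3} (hxn : ⟪x,x⟫ = 1) (hzn : ⟪z,z⟫ = 1) (hxz : ⟪x,z⟫ = 0)
    (h1 : ⟪v,x⟫ = 0) (h2 : ⟪v, cross3 z x⟫ = 0) (h3 : ⟪v,z⟫ = 0) : v = 0 := by
  set y := cross3 z x with hy
  have e1 : ⟪z,v⟫ = (0:ℝ) := by rw [real_inner_comm]; exact h3
  have e2 : ⟪x,v⟫ = (0:ℝ) := by rw [real_inner_comm]; exact h1
  have e3 : ⟪y,v⟫ = (0:ℝ) := by rw [real_inner_comm]; exact h2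
  have hyv : cross3 y v = 0 := by
    rw [hy, cross_cross_left, e1, e2]
    simp only [zero_smul, sub_zero]
  have hyy : ⟪y,y⟫ = (1:ℝ) := by
    rw [hy, inner_cross_cyclic z x (cross3 z x), cross_cross_right, hxn, hxz]
    simp only [one_smul, zero_smul, sub_zero]
    exact hzn
  have h := cross_cross_right y y v
  rw [hyv, cross3_zero_right, hyy, e3, zero_smul, one_smul] at h
  have := h.symm
  rw [sub_eq_zero] at this
  exact this.symm ▸ rfl

lemma decomp3 {x z : E3} (hxn : ⟪x,x⟫ = 1) (hzn : ⟪z,z⟫ = 1) (hxz : ⟪x,z⟫ = 0)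
    (v : E3) : v = ⟪v,x⟫ • x + ⟪v, cross3 z x⟫ • cross3 z x + ⟪v,z⟫ • z := by
  set y := cross3 z x with hy
  have hyy : ⟪y,y⟫ = (1:ℝ) := by
    rw [hy, inner_cross_cyclic z x (cross3 z x), cross_cross_right, hxn, hxz]
    simp only [one_smul, zero_smul, sub_zero]
    exact hzn
  have hxy : ⟪x,y⟫ = (0:ℝ) := by
    rw [real_inner_comm, hy]; exact inner_cross3_self_eq_right z x
  have hzy : ⟪z,y⟫ = (0:ℝ) := by
    rw [real_inner_comm, hy]; exact inner_cross3_self_eq_left z x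
  have hyx : ⟪y,x⟫ = (0:ℝ) := by rw [real_inner_comm]; exact hxy
  have hyz : ⟪y,z⟫ = (0:ℝ) := by rw [real_inner_comm]; exact hzy
  have hzx : ⟪z,x⟫ = (0:ℝ) := by rw [real_inner_comm]; exact hxz
  have := perp3_eq_zero (v := v - (⟪v,x⟫ • x + ⟪v,y⟫ • y + ⟪v,z⟫ • z)) hxn hzn hxz ?_ ?_ ?_
  · linear_combination (norm := module) this
  · simp only [inner_sub_left, inner_add_left, inner_smul_left, conj_trivial, hxn,
      hyx, hzx]
    ring
  · rw [← hy]
    simp only [inner_sub_left, inner_add_left, inner_smul_left, conj_trivial, hyy, hxy,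
      hzy, hyz]
    ring
  · simp only [inner_sub_left, inner_add_left, inner_smul_left, conj_trivial, hzn,
      hyz, hxz]
    ring

lemma cross3_anticomm (a b : E3) : cross3 a b = - cross3 b a := by
  apply ext3; intro i; fin_cases i <;> simp [cross3_apply, PiLp.neg_apply] <;> ring

lemma innerD {f g : ℝ → E3} {f' g' : E3} {t : ℝ} (hf : HasDerivAt f f' t)
    (hg : HasDerivAt g g' t) :
    HasDerivAt (fun s => ⟪f s, g s⟫) (⟪f t, g'⟫ + ⟪f', g t⟫) t := hf.inner ℝ hg

/-- the paper's main analytic result: ω_D = ω_{z⊥} + ω_z ẑ, with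
ω_{z⊥} = (ρ × ρ̇)/‖ρ‖² and ω_z = (ω_y k_z − k̇_x)/k_y, is the angular velocity of the
whole desired frame (x̂, ŷ, ẑ). -/
theorem stmt17 (ρ k : ℝ → EuclideanSpace ℝ (Fin 3))
    (ρ' k' : EuclideanSpace ℝ (Fin 3)) (t : ℝ)
    (hρ : HasDerivAt ρ ρ' t) (hk : HasDerivAt k k' t)
    (hρ0 : ρ t ≠ 0)
    (z x y : ℝ → EuclideanSpace ℝ (Fin 3))
    (hz : ∀ s, z s = ‖ρ s‖⁻¹ • ρ s)
    (hzk : cross3 (z t) (k t) ≠ 0)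
    (hx : ∀ s, x s = ‖cross3 (z s) (k s)‖⁻¹ • cross3 (z s) (k s))
    (hxdiff : DifferentiableAt ℝ x t)
    (hy : ∀ s, y s = cross3 (z s) (x s))
    (ωperp ωD : EuclideanSpace ℝ (Fin 3)) (ωy ωz : ℝ)
    (hωperp : ωperp = (‖ρ t‖ ^ 2)⁻¹ • cross3 (ρ t) ρ')
    (hωy : ωy = ⟪ωperp, y t⟫)
    (hωz : ωz = (ωy * ⟪k t, z t⟫ - ⟪k', x t⟫) / ⟪k t, y t⟫)
    (hωD : ωD = ωperp + ωz • z t) :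
    HasDerivAt z (cross3 ωD (z t)) t ∧
      HasDerivAt x (cross3 ωD (x t)) t ∧
      HasDerivAt y (cross3 ωD (y t)) t := by
  have hn : ‖ρ t‖ ≠ 0 := norm_ne_zero_iff.2 hρ0
  set n : ℝ := ‖ρ t‖ with hndef
  set P : ℝ := ⟪ρ t, ρ'⟫ with hPdef
  -- derivative of ‖ρ s‖
  have hq : HasDerivAt (fun s => ⟪ρ s, ρ s⟫) (⟪ρ t, ρ'⟫ + ⟪ρ', ρ t⟫) t := innerD hρ hρ
  have hq0 : ⟪ρ t, ρ t⟫ ≠ (0:ℝ) := by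
    rw [real_inner_self_eq_norm_sq]; positivity
  have hsq : HasDerivAt (fun s => Real.sqrt ⟪ρ s, ρ s⟫)
      (1 / (2 * Real.sqrt ⟪ρ t, ρ t⟫) * (⟪ρ t, ρ'⟫ + ⟪ρ', ρ t⟫)) t :=
    (Real.hasDerivAt_sqrt hq0).comp t hq
  have hfun : (fun s => Real.sqrt ⟪ρ s, ρ s⟫) = fun s => ‖ρ s‖ := by
    funext s; rw [real_inner_self_eq_norm_sq, Real.sqrt_sq (norm_nonneg _)]
  have hsqrtn : Real.sqrt ⟪ρ t, ρ t⟫ = n := by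
    rw [real_inner_self_eq_norm_sq, Real.sqrt_sq (norm_nonneg _)]
  have hPP : ⟪ρ', ρ t⟫ = P := real_inner_comm _ _
  have hN : HasDerivAt (fun s => ‖ρ s‖) (P / n) t := by
    rw [← hfun]
    convert hsq using 1
    rw [hsqrtn, hPP, ← hPdef]
    field_simp
    ring
  have hNinv : HasDerivAt (fun s => ‖ρ s‖⁻¹) (-(P / n) / n ^ 2) t := hN.inv hn
  have hzfun : z = fun s => ‖ρ s‖⁻¹ • ρ s := funext hz
  have hzd0 : HasDerivAt z (n⁻¹ • ρ' + (-(P / n) / n ^ 2) • ρ t) t := by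
    rw [hzfun]; exact hNinv.smul hρ
  -- the value of z's derivative is cross3 ωD (z t)
  have EZ : n⁻¹ • ρ' + (-(P / n) / n ^ 2) • ρ t = cross3 ωD (z t) := by
    rw [hωD, cross_add_left, cross_smul_left, hz t, ← hndef, cross3_self_eq, smul_zero,
      add_zero, hωperp, cross_smul_left, cross_smul_right, cross_cross_left,
      real_inner_self_eq_norm_sq, ← hndef, hPP]
    match_scalars <;> field_simp <;> try ring
  have hzd : HasDerivAt z (cross3 ωD (z t)) t := EZ ▸ hzd0
  -- basic orthonormality at t
  have hm : ‖cross3 (z t) (k t)‖ ≠ 0 := norm_ne_zero_iff.2 hzk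
  have hzz1 : ⟪z t, z t⟫ = (1:ℝ) := by
    rw [hz t, real_inner_smul_left, real_inner_smul_right, real_inner_self_eq_norm_sq, ← hndef]
    field_simp
  have hxx1 : ⟪x t, x t⟫ = (1:ℝ) := by
    rw [hx t, real_inner_smul_left, real_inner_smul_right, real_inner_self_eq_norm_sq]
    field_simp
  have hxzt : ∀ s, ⟪x s, z s⟫ = (0:ℝ) := fun s => by
    rw [hx s, real_inner_smul_left, inner_cross3_self_eq_left, mul_zero]
  have hxkt : ∀ s, ⟪x s, k s⟫ = (0:ℝ) := fun s => by
    rw [hx s, real_inner_smul_left, inner_cross3_self_eq_right, mul_zero]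
  set X' : E3 := deriv x t with hX'def
  have hX : HasDerivAt x X' t := hxdiff.hasDerivAt
  -- ⟪X', x t⟫ = 0
  have hu := hasDerivAt_cross hzd hk
  have hune : ∀ᶠ s in nhds t, cross3 (z s) (k s) ≠ 0 :=
    hu.continuousAt.eventually_ne hzk
  have hx1 : (fun s => ⟪x s, x s⟫) =ᶠ[nhds t] fun _ => (1:ℝ) := hune.mono (fun s hs => by
    show ⟪x s, x s⟫ = (1:ℝ)
    rw [hx s, real_inner_smul_left, real_inner_smul_right, real_inner_self_eq_norm_sq]
    field_simp [norm_ne_zero_iff.2 hs])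
  have hdc : HasDerivAt (fun s => ⟪x s, x s⟫) 0 t :=
    (hasDerivAt_const t (1:ℝ)).congr_of_eventuallyEq hx1
  have h0 := (innerD hX hX).unique hdc
  have hXx : ⟪X', x t⟫ = 0 := by
    have hc := real_inner_comm (x t) X'
    linarith
  -- ⟪X', z t⟫ = -ωy
  have hdz : HasDerivAt (fun s => ⟪x s, z s⟫) 0 t := by
    rw [funext hxzt]; exact hasDerivAt_const t 0
  have h1 := (innerD hX hzd).unique hdz
  have hωperpz : ⟪ωperp, z t⟫ = 0 := by
    rw [hωperp, hz t, real_inner_smul_left, real_inner_smul_right, inner_cross3_self_eq_left]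
    ring
  have hxt_cross : ⟪x t, cross3 ωD (z t)⟫ = ωy := by
    rw [hωD, cross_add_left, cross_smul_left, cross3_self_eq, smul_zero, add_zero,
      real_inner_comm, inner_cross_cyclic, hωy, hy t]
  rw [hxt_cross] at h1
  have hXz : ⟪X', z t⟫ = -ωy := by linarith
  -- ⟪X', k t⟫
  have hdk : HasDerivAt (fun s => ⟪x s, k s⟫) 0 t := by
    rw [funext hxkt]; exact hasDerivAt_const t 0
  have h2 := (innerD hX hk).unique hdk
  -- ⟪k t, y t⟫ = -m
  have hYdef : y t = cross3 (z t) (x t) := hy t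
  have hky : ⟪k t, y t⟫ = -‖cross3 (z t) (k t)‖ := by
    rw [hYdef, hx t, cross_smul_right, real_inner_smul_right, ← inner_cross_cyclic,
      cross3_anticomm (k t) (z t), inner_neg_left, real_inner_self_eq_norm_sq]
    field_simp
  have hkyne : ⟪k t, y t⟫ ≠ 0 := by rw [hky]; exact neg_ne_zero.2 hm
  have hkx : ⟪k t, x t⟫ = 0 := by rw [real_inner_comm]; exact hxkt t
  have hdec := decomp3 hxx1 hzz1 (hxzt t) (k t)
  rw [← hYdef] at hdec
  have hXk : ⟪X', k t⟫ = ⟪k t, y t⟫ * ⟪X', y t⟫ + ⟪k t, z t⟫ * ⟪X', z t⟫ := by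
    conv_lhs => rw [hdec]
    simp only [inner_add_right, real_inner_smul_right, hkx, hXx]
    ring
  have hXy : ⟪X', y t⟫ = ωz := by
    rw [hωz, real_inner_comm (x t) k', eq_div_iff hkyne]
    linear_combination h2 - hXk - (⟪k t, z t⟫ : ℝ) * hXz
  -- candidate components
  have hyy1 : ⟪y t, y t⟫ = (1:ℝ) := by
    rw [hYdef, inner_cross_cyclic, cross_cross_right, hxx1, hxzt t]
    simp only [one_smul, zero_smul, sub_zero]
    exact hzz1
  have hCx : ⟪cross3 ωD (x t), x t⟫ = 0 := inner_cross3_self_eq_right _ _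
  have hCz : ⟪cross3 ωD (x t), z t⟫ = -ωy := by
    rw [hωD, cross_add_left, cross_smul_left, inner_add_left, real_inner_smul_left,
      inner_cross3_self_eq_left, inner_cross_cyclic, cross3_anticomm (x t) (z t),
      inner_neg_right, ← hYdef, ← hωy]
    ring
  have hCy : ⟪cross3 ωD (x t), y t⟫ = ωz := by
    rw [hωD, cross_add_left, cross_smul_left, inner_add_left, real_inner_smul_left,
      ← hYdef, hyy1, inner_cross_cyclic]
    have hxy : cross3 (x t) (y t) = z t := by
      rw [hYdef, cross_cross_right, hxx1, hxzt t]
      simp only [one_smul, zero_smul, sub_zero]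
    rw [hxy, hωperpz]
    ring
  have EX : X' = cross3 ωD (x t) := by
    have hw := perp3_eq_zero (x := x t) (z := z t) (v := X' - cross3 ωD (x t))
      hxx1 hzz1 (hxzt t) ?_ ?_ ?_
    · linear_combination (norm := module) hw
    · rw [inner_sub_left, hXx, hCx]; ring
    · rw [inner_sub_left, ← hYdef, hXy, hCy]; ring
    · rw [inner_sub_left, hXz, hCz]; ring
  refine ⟨hzd, by rw [← EX]; exact hX, ?_⟩
  have hyd : HasDerivAt y (cross3 (cross3 ωD (z t)) (x t) + cross3 (z t) X') t := by
    rw [funext hy]; exact hasDerivAt_cross hzd hX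
  have hval : cross3 (cross3 ωD (z t)) (x t) + cross3 (z t) X' = cross3 ωD (y t) := by
    rw [EX, hYdef, jacobi3]
  rw [← hval]; exact hyd
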